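/- Let W₁ and W₂ be regularized wavelet sets with wavelet induced isomorphisms h₁ = h̃_{W₁} and h₂ = h̃_{W₂}. Set ω := {x ∈ [0,1) : h₁(x) ≠ h₂(x)} and ω' := {x ∈ [0,1) : h₁^{-1}(x) ≠ h₂^{-1}(x)}. Then d(W₁, W₂) = (4π μ(ω'))^{1/2} + (2 ν(ω))^{1/2}. -/

import Mathlib

open MeasureTheory Set Real Filter
open scoped symmDiff Classical

noncomputable section

/-- The Littlewood–Paley set `E = [-2π,-π) ∪ [π,2π)`. -/
def E : Set ℝ := Ico (-(2*π)) (-π) ∪ Ico π (2*π)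

/-- `tau x = x + 2jπ`, where `j` is the unique integer with `x + 2jπ ∈ E`. -/
def tau (x : ℝ) : ℝ :=
  if x - 2*π*(⌊x/(2*π)⌋ : ℝ) < π then x - 2*π*(⌊x/(2*π)⌋ : ℝ) - 2*π
  else x - 2*π*(⌊x/(2*π)⌋ : ℝ)

/-- `delta x = 2^k x`, where (for `x ≠ 0`) `k` is the unique integer with `2^k x ∈ E`. -/
def delta (x : ℝ) : ℝ :=
  if 0 < x then (2:ℝ)^(⌈Real.logb 2 (π/x)⌉) * x
  else (2:ℝ)^(⌊Real.logb 2 (2*π/(-x))⌋) * x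

/-- The map `ξ : E → [0,1)`. -/
def xiMap (x : ℝ) : ℝ := if x < 0 then x/(2*π) + 1 else x/(2*π)

/-- The inverse `ξ⁻¹ : [0,1) → E`. -/
def xiInv (y : ℝ) : ℝ := if y < 1/2 then 2*π*(y-1) else 2*π*y

/-- The translates `{W + 2kπ}_{k ∈ ℤ}` form a partition of `ℝ`. -/
def TransPartition (W : Set ℝ) : Prop :=
  (⋃ k : ℤ, (fun x : ℝ => x + 2*π*(k:ℝ)) '' W) = univ ∧
  Pairwise fun k l : ℤ =>
    Disjoint ((fun x : ℝ => x + 2*π*(k:ℝ)) '' W) ((fun x : ℝ => x + 2*π*(l:ℝ)) '' W)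

/-- The dilates `{2^k W}_{k ∈ ℤ}` form a partition of `ℝ \ {0}`. -/
def DilPartition (W : Set ℝ) : Prop :=
  (⋃ k : ℤ, (fun x : ℝ => (2:ℝ)^k * x) '' W) = {(0:ℝ)}ᶜ ∧
  Pairwise fun k l : ℤ =>
    Disjoint ((fun x : ℝ => (2:ℝ)^k * x) '' W) ((fun x : ℝ => (2:ℝ)^l * x) '' W)

/-- A regularized wavelet set. -/
def IsRegularizedWaveletSet (W : Set ℝ) : Prop :=
  MeasurableSet W ∧ TransPartition W ∧ DilPartition W

/-- The wavelet induced isomorphism `h̃_W = ξ ∘ τ|_W ∘ (δ|_W)⁻¹ ∘ ξ⁻¹` of `[0,1)`. -/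
def hIso (W : Set ℝ) : ℝ → ℝ :=
  fun t => xiMap (tau (Function.invFunOn delta W (xiInv t)))

/-- The class of wavelet induced maps of `[0,1)` (Proposition 2.3 (i)-(ii)). -/
def IsWaveletInduced (h : ℝ → ℝ) : Prop :=
  Set.BijOn h (Ico (0:ℝ) 1) (Ico (0:ℝ) 1) ∧
  Measurable ((Ico (0:ℝ) 1).restrict h) ∧
  ∃ A B : ℤ → Set ℝ,
    (∀ k, MeasurableSet (A k)) ∧ (∀ k, MeasurableSet (B k)) ∧
    (⋃ k, A k) = Ico (1/2 : ℝ) 1 ∧ Pairwise (Function.onFun Disjoint A) ∧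
    (⋃ k, B k) = Ico (0:ℝ) (1/2) ∧ Pairwise (Function.onFun Disjoint B) ∧
    (∀ k, ∀ x ∈ A k, h x = Int.fract ((2:ℝ)^k * x)) ∧
    (∀ k, ∀ x ∈ B k, h x = Int.fract ((2:ℝ)^k * (x - 1)))

/-- The class `WI₁`. -/
def MemWI1 (f : ℝ → ℝ) : Prop :=
  ∃ A B : ℕ → Set ℝ,
    (∀ k, MeasurableSet (A k)) ∧ (∀ k, MeasurableSet (B k)) ∧
    (⋃ k, A k) = Ico (1/2 : ℝ) 1 ∧ Pairwise (Function.onFun Disjoint A) ∧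
    (⋃ k, B k) = Ico (0:ℝ) (1/2) ∧ Pairwise (Function.onFun Disjoint B) ∧
    (∀ k, ∀ x ∈ A k, f x = x / 2^(k+1)) ∧
    (∀ k, ∀ x ∈ B k, f x = (x - 1) / 2^(k+1) + 1)

/-- The class `WI₂`. -/
def MemWI2 (g : ℝ → ℝ) : Prop :=
  Measurable ((Ico (0:ℝ) 1).restrict g) ∧
  Set.MapsTo g (Ico (0:ℝ) 1) (Ico (0:ℝ) 1) ∧
  Set.InjOn g (Ico (0:ℝ) 1) ∧
  ∀ x ∈ Ico (0:ℝ) 1, ∃ k l : ℕ, g x = (x + l) / 2^k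

/-- The Schröder–Cantor–Bernstein map `u ⋄ v` for injections between arbitrary types. -/
def scb {α β : Type*} (u : α → β) (v : β → α) : α → β :=
  fun x =>
    if x ∈ ⋃ k : ℕ, (v ∘ u)^[k] '' (Set.range v)ᶜ then u x
    else if h2 : x ∈ Set.range v then Classical.choose h2
    else u x

/-- The Schröder–Cantor–Bernstein map `u ⋄ v` for maps of `[0,1)`. -/
def scbOn (u v : ℝ → ℝ) : ℝ → ℝ :=
  fun x =>
    if x ∈ ⋃ k : ℕ, (v ∘ u)^[k] '' (Ico (0:ℝ) 1 \ v '' (Ico (0:ℝ) 1)) then u x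
    else Function.invFunOn v (Ico (0:ℝ) 1) x

/-- The metric `d` on wavelet sets. -/
def dws (W₁ W₂ : Set ℝ) : ℝ :=
  Real.sqrt (volume (W₁ ∆ W₂)).toReal + Real.sqrt (∫ x in W₁ ∆ W₂, |x|⁻¹)

/-- The measure `ν` on `[0,1)` with density `(1-x)⁻¹` on `[0,1/2)` and `x⁻¹` on `[1/2,1)`. -/
def nuMeasure : Measure ℝ :=
  volume.withDensity (fun x =>
    ENNReal.ofReal (if x ∈ Ico (0:ℝ) (1/2) then (1-x)⁻¹
      else if x ∈ Ico (1/2:ℝ) 1 then x⁻¹ else 0))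

/-! ### Basic lemmas -/

lemma mem_E_iff {x : ℝ} : x ∈ E ↔ (-(2*π) ≤ x ∧ x < -π) ∨ (π ≤ x ∧ x < 2*π) := by
  simp [E, mem_Ico]

lemma E_ne_zero {e : ℝ} (he : e ∈ E) : e ≠ 0 := by
  rcases mem_E_iff.1 he with ⟨_, h⟩ | ⟨h, _⟩
  · nlinarith [pi_pos]
  · nlinarith [pi_pos]

lemma abs_le_of_mem_E {e : ℝ} (he : e ∈ E) : π ≤ |e| ∧ |e| ≤ 2*π := by
  rcases mem_E_iff.1 he with ⟨h1, h2⟩ | ⟨h1, h2⟩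
  · rw [abs_of_neg (by nlinarith [pi_pos])]; constructor <;> linarith
  · rw [abs_of_nonneg (by nlinarith [pi_pos])]; constructor <;> linarith

lemma tau_spec (x : ℝ) : ∃ n : ℤ, tau x = x + 2*π*n := by
  unfold tau; split_ifs
  · exact ⟨-⌊x/(2*π)⌋ - 1, by push_cast; ring⟩
  · exact ⟨-⌊x/(2*π)⌋, by push_cast; ring⟩

lemma tau_mem_E (x : ℝ) : tau x ∈ E := by
  have h1 : (⌊x/(2*π)⌋ : ℝ) ≤ x/(2*π) := Int.floor_le _
  have h2 : x/(2*π) < ⌊x/(2*π)⌋ + 1 := Int.lt_floor_add_one _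
  have hb : 0 ≤ x - 2*π*(⌊x/(2*π)⌋ : ℝ) ∧ x - 2*π*(⌊x/(2*π)⌋ : ℝ) < 2*π := by
    constructor
    · have := mul_le_mul_of_nonneg_left h1 (le_of_lt Real.two_pi_pos)
      rw [mul_div_cancel₀ _ (ne_of_gt Real.two_pi_pos)] at this; linarith
    · have := mul_lt_mul_of_pos_left h2 Real.two_pi_pos
      rw [mul_div_cancel₀ _ (ne_of_gt Real.two_pi_pos)] at this; linarith
  rw [mem_E_iff]; unfold tau; split_ifs with h
  · left; constructor <;> linarith [hb.1, hb.2]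
  · right; constructor <;> linarith [hb.1, hb.2, not_lt.1 h]

/-- uniqueness of representatives in `E` modulo `2πℤ` -/
lemma E_translate_unique {e e' : ℝ} (he : e ∈ E) (he' : e' ∈ E) {n : ℤ}
    (h : e' = e + 2*π*n) : e' = e := by
  have hn : n = 0 := by
    have hπ := pi_pos
    rcases mem_E_iff.1 he with ⟨a1, a2⟩ | ⟨a1, a2⟩ <;>
      rcases mem_E_iff.1 he' with ⟨b1, b2⟩ | ⟨b1, b2⟩
    · have l1 : (-1:ℝ) < n := by nlinarith
      have l2 : (n:ℝ) < 1 := by nlinarith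
      have : (-1:ℤ) < n := by exact_mod_cast l1
      have : (n:ℤ) < 1 := by exact_mod_cast l2
      omega
    · have l1 : (1:ℝ) < n := by nlinarith
      have l2 : (n:ℝ) < 2 := by nlinarith
      have : (1:ℤ) < n := by exact_mod_cast l1
      have : (n:ℤ) < 2 := by exact_mod_cast l2
      omega
    · have l1 : (-2:ℝ) < n := by nlinarith
      have l2 : (n:ℝ) < -1 := by nlinarith
      have : (-2:ℤ) < n := by exact_mod_cast l1
      have : (n:ℤ) < -1 := by exact_mod_cast l2
      omega
    · have l1 : (-1:ℝ) < n := by nlinarith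
      have l2 : (n:ℝ) < 1 := by nlinarith
      have : (-1:ℤ) < n := by exact_mod_cast l1
      have : (n:ℤ) < 1 := by exact_mod_cast l2
      omega
  rw [h, hn]; push_cast; ring

lemma tau_eq_of_mem {e x : ℝ} (he : e ∈ E) {n : ℤ} (h : x = e + 2*π*n) : tau x = e := by
  obtain ⟨m, hm⟩ := tau_spec x
  have : tau x = e + 2*π*((n + m : ℤ):ℝ) := by rw [hm, h]; push_cast; ring
  exact E_translate_unique he (tau_mem_E x) this

lemma tau_add_int (x : ℝ) (n : ℤ) : tau (x + 2*π*n) = tau x := by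
  obtain ⟨m, hm⟩ := tau_spec x
  exact tau_eq_of_mem (tau_mem_E x) (n := n - m)
    (by rw [hm]; push_cast; ring_nf)

lemma delta_spec (x : ℝ) : ∃ k : ℤ, delta x = 2^k * x := by
  unfold delta; split_ifs
  · exact ⟨_, rfl⟩
  · exact ⟨_, rfl⟩

lemma delta_zero : delta 0 = 0 := by
  unfold delta; split_ifs with h
  · exact absurd h (lt_irrefl 0)
  · exact mul_zero _

lemma zpow_int_cast_real (k : ℤ) : (2:ℝ)^((k:ℤ):ℝ) = 2^k := Real.rpow_intCast 2 k

lemma delta_mem_E {x : ℝ} (hx : x ≠ 0) : delta x ∈ E := by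
  have hπ := pi_pos
  unfold delta; split_ifs with h
  · -- x > 0
    set k : ℤ := ⌈Real.logb 2 (π/x)⌉ with hk
    have hpx : 0 < π/x := div_pos hπ h
    have hlogb : (2:ℝ)^(Real.logb 2 (π/x)) = π/x :=
      Real.rpow_logb (by norm_num) (by norm_num) hpx
    have h1 : π/x ≤ (2:ℝ)^(k:ℝ) := by
      rw [← hlogb]
      exact (Real.rpow_le_rpow_left_iff (by norm_num)).2 (Int.le_ceil _)
    have h2 : (2:ℝ)^(k:ℝ) < (π/x) * 2 := by
      have : (2:ℝ)^(k:ℝ) < 2^(Real.logb 2 (π/x) + 1) :=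
        (Real.rpow_lt_rpow_left_iff (by norm_num)).2 (Int.ceil_lt_add_one _)
      rwa [Real.rpow_add (by norm_num), hlogb, Real.rpow_one] at this
    rw [zpow_int_cast_real] at h1 h2
    rw [mem_E_iff]; right
    constructor
    · calc π = (π/x) * x := by field_simp
        _ ≤ 2^k * x := by exact mul_le_mul_of_nonneg_right h1 h.le
    · calc (2:ℝ)^k * x < ((π/x)*2) * x := mul_lt_mul_of_pos_right h2 h
        _ = 2*π := by field_simp
  · -- x < 0
    have hx' : x < 0 := lt_of_le_of_ne (not_lt.1 h) hx
    have hy : 0 < -x := by linarith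
    set k : ℤ := ⌊Real.logb 2 (2*π/(-x))⌋ with hk
    have hpx : 0 < 2*π/(-x) := div_pos Real.two_pi_pos hy
    have hlogb : (2:ℝ)^(Real.logb 2 (2*π/(-x))) = 2*π/(-x) :=
      Real.rpow_logb (by norm_num) (by norm_num) hpx
    have h1 : (2:ℝ)^(k:ℝ) ≤ 2*π/(-x) := by
      rw [← hlogb]
      exact (Real.rpow_le_rpow_left_iff (by norm_num)).2 (Int.floor_le _)
    have hfl : Real.logb 2 (2*π/(-x)) < (k:ℝ) + 1 := by
      rw [hk]; exact Int.lt_floor_add_one _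
    have h2 : (2*π/(-x))/2 < (2:ℝ)^(k:ℝ) := by
      have : (2:ℝ)^(Real.logb 2 (2*π/(-x)) - 1) < 2^(k:ℝ) :=
        (Real.rpow_lt_rpow_left_iff (by norm_num)).2 (by linarith)
      rwa [Real.rpow_sub (by norm_num), hlogb, Real.rpow_one] at this
    rw [zpow_int_cast_real] at h1 h2
    rw [mem_E_iff]; left
    have e1 : (2:ℝ)^k * (-x) ≤ 2*π := by
      calc (2:ℝ)^k * (-x) ≤ (2*π/(-x)) * (-x) := mul_le_mul_of_nonneg_right h1 hy.le
        _ = 2*π := by field_simp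
    have e2 : π < (2:ℝ)^k * (-x) := by
      calc π = ((2*π/(-x))/2) * (-x) := by field_simp
        _ < 2^k * (-x) := mul_lt_mul_of_pos_right h2 hy
    constructor
    · nlinarith
    · nlinarith

lemma E_dilate_unique {e e' : ℝ} (he : e ∈ E) (he' : e' ∈ E) {k : ℤ}
    (h : e' = 2^k * e) : e' = e := by
  have hπ := pi_pos
  have hzk : (0:ℝ) < 2^k := zpow_pos (by norm_num) k
  have habs : |e'| = 2^k * |e| := by
    rw [h, abs_mul, abs_of_pos hzk]
  have he0 : 0 < |e| := abs_pos.2 (E_ne_zero he)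
  obtain ⟨a1, a2⟩ := abs_le_of_mem_E he
  obtain ⟨b1, b2⟩ := abs_le_of_mem_E he'
  -- get strict bounds: 2^k < 2 and 1/2 < 2^k unless boundary cases
  have hup : (2:ℝ)^k * |e| ≤ 2 * |e| := by nlinarith
  have hlo : |e| / 2 ≤ (2:ℝ)^k * |e| := by nlinarith
  have hk2 : (2:ℝ)^k ≤ 2 := le_of_mul_le_mul_right (by linarith) he0
  have hk1 : (1:ℝ)/2 ≤ (2:ℝ)^k := by
    have : (1/2) * |e| ≤ (2:ℝ)^k * |e| := by nlinarith
    exact le_of_mul_le_mul_right (by linarith) he0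
  have hk2' : k ≤ 1 := by
    have : (2:ℝ)^k ≤ 2^(1:ℤ) := by simpa using hk2
    exact (zpow_le_zpow_iff_right₀ (by norm_num : (1:ℝ) < 2)).1 this
  have hk1' : -1 ≤ k := by
    have : (2:ℝ)^(-1:ℤ) ≤ 2^k := by
      rw [zpow_neg, zpow_one]; rw [one_div] at hk1; exact hk1
    exact (zpow_le_zpow_iff_right₀ (by norm_num : (1:ℝ) < 2)).1 this
  -- boundary k = 1 or k = -1 impossible
  interval_cases k
  · exfalso
    rw [show ((2:ℝ)^(-1:ℤ)) = 1/2 by norm_num] at h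
    rcases mem_E_iff.1 he with ⟨c1, c2⟩ | ⟨c1, c2⟩ <;>
      rcases mem_E_iff.1 he' with ⟨d1, d2⟩ | ⟨d1, d2⟩ <;> nlinarith
  · rw [h]; norm_num
  · exfalso
    rw [show ((2:ℝ)^(1:ℤ)) = 2 by norm_num] at h
    rcases mem_E_iff.1 he with ⟨c1, c2⟩ | ⟨c1, c2⟩ <;>
      rcases mem_E_iff.1 he' with ⟨d1, d2⟩ | ⟨d1, d2⟩ <;> nlinarith
  
lemma delta_eq_of_mem {e x : ℝ} (he : e ∈ E) {k : ℤ} (h : e = 2^k * x) : delta x = e := by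
  have hx : x ≠ 0 := by
    rintro rfl
    exact E_ne_zero he (by rw [h, mul_zero])
  obtain ⟨i, hi⟩ := delta_spec x
  have hde : delta x ∈ E := delta_mem_E hx
  have : e = 2^(k - i) * delta x := by
    rw [hi, h, ← mul_assoc, ← zpow_add₀ (by norm_num : (2:ℝ) ≠ 0)]
    ring_nf
  exact (E_dilate_unique hde he this).symm

/-! ### xi lemmas -/

lemma xiMap_pos {e : ℝ} (h : e ∈ Ico π (2*π)) :
    xiMap e = e/(2*π) ∧ xiMap e ∈ Ico (1/2:ℝ) 1 := by
  have hπ := pi_pos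
  obtain ⟨h1, h2⟩ := h
  have he0 : ¬ e < 0 := by push_neg; linarith
  unfold xiMap
  rw [if_neg he0]
  refine ⟨rfl, ⟨?_, ?_⟩⟩
  · rw [le_div_iff₀ Real.two_pi_pos]; linarith
  · rw [div_lt_one Real.two_pi_pos]; linarith

lemma xiMap_neg {e : ℝ} (h : e ∈ Ico (-(2*π)) (-π)) :
    xiMap e = e/(2*π) + 1 ∧ xiMap e ∈ Ico (0:ℝ) (1/2) := by
  have hπ := pi_pos
  obtain ⟨h1, h2⟩ := h
  have he0 : e < 0 := by linarith
  unfold xiMap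
  rw [if_pos he0]
  refine ⟨rfl, ⟨?_, ?_⟩⟩
  · have : (-1:ℝ) ≤ e/(2*π) := by
      rw [le_div_iff₀ Real.two_pi_pos]; linarith
    linarith
  · have : e/(2*π) < -(1/2) := by
      rw [div_lt_iff₀ Real.two_pi_pos]; linarith
    linarith

lemma xiMap_mem {e : ℝ} (he : e ∈ E) : xiMap e ∈ Ico (0:ℝ) 1 := by
  rcases he with h | h
  · obtain ⟨_, hm⟩ := xiMap_neg h
    exact ⟨hm.1, by linarith [hm.2]⟩
  · obtain ⟨_, hm⟩ := xiMap_pos h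
    exact ⟨by linarith [hm.1], hm.2⟩

lemma xiInv_neg {t : ℝ} (h1 : 0 ≤ t) (h2 : t < 1/2) :
    xiInv t = 2*π*(t-1) ∧ xiInv t ∈ Ico (-(2*π)) (-π) := by
  have hπ := pi_pos
  unfold xiInv
  rw [if_pos h2]
  exact ⟨rfl, ⟨by nlinarith, by nlinarith⟩⟩

lemma xiInv_pos {t : ℝ} (h1 : 1/2 ≤ t) (h2 : t < 1) :
    xiInv t = 2*π*t ∧ xiInv t ∈ Ico π (2*π) := by
  have hπ := pi_pos
  unfold xiInv
  rw [if_neg (by push_neg; exact h1)]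
  exact ⟨rfl, ⟨by nlinarith, by nlinarith⟩⟩

lemma xiInv_mem {t : ℝ} (ht : t ∈ Ico (0:ℝ) 1) : xiInv t ∈ E := by
  by_cases h : t < 1/2
  · exact Or.inl (xiInv_neg ht.1 h).2
  · exact Or.inr (xiInv_pos (not_lt.1 h) ht.2).2

lemma xiMap_xiInv {t : ℝ} (ht : t ∈ Ico (0:ℝ) 1) : xiMap (xiInv t) = t := by
  have hπ := pi_pos
  by_cases h : t < 1/2
  · obtain ⟨he, hm⟩ := xiInv_neg ht.1 h
    rw [(xiMap_neg (he ▸ hm)).1, he]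
    field_simp; ring
  · obtain ⟨he, hm⟩ := xiInv_pos (not_lt.1 h) ht.2
    rw [(xiMap_pos (he ▸ hm)).1, he]
    field_simp

lemma xiInv_xiMap {e : ℝ} (he : e ∈ E) : xiInv (xiMap e) = e := by
  have hπ := pi_pos
  rcases he with h | h
  · obtain ⟨he', hm⟩ := xiMap_neg h
    unfold xiInv
    rw [if_pos (he' ▸ hm.2), he']
    field_simp; ring
  · obtain ⟨he', hm⟩ := xiMap_pos h
    unfold xiInv
    rw [if_neg (by push_neg; exact he' ▸ hm.1), he']
    field_simp

lemma xiMap_injOn : InjOn xiMap E := fun a ha b hb h => by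
  rw [← xiInv_xiMap ha, ← xiInv_xiMap hb, h]

/-! ### Wavelet set facts -/

lemma trans_cover {W : Set ℝ} (hW : IsRegularizedWaveletSet W) (x : ℝ) :
    ∃ w ∈ W, ∃ n : ℤ, x = w + 2*π*n := by
  have hx : x ∈ ⋃ k : ℤ, (fun x : ℝ => x + 2*π*(k:ℝ)) '' W := by
    rw [hW.2.1.1]; trivial
  obtain ⟨k, ⟨w, hw, hwk⟩⟩ := mem_iUnion.1 hx
  exact ⟨w, hw, k, hwk.symm⟩

lemma zero_not_mem {W : Set ℝ} (hW : IsRegularizedWaveletSet W) : (0:ℝ) ∉ W := by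
  intro h0
  have : (0:ℝ) ∈ ⋃ k : ℤ, (fun x : ℝ => (2:ℝ)^k * x) '' W :=
    mem_iUnion.2 ⟨0, ⟨0, h0, by norm_num⟩⟩
  rw [hW.2.2.1] at this
  exact this rfl

lemma dil_cover {W : Set ℝ} (hW : IsRegularizedWaveletSet W) {x : ℝ} (hx : x ≠ 0) :
    ∃ w ∈ W, ∃ k : ℤ, x = 2^k * w := by
  have : x ∈ ⋃ k : ℤ, (fun x : ℝ => (2:ℝ)^k * x) '' W := by
    rw [hW.2.2.1]; exact hx
  obtain ⟨k, ⟨w, hw, hwk⟩⟩ := mem_iUnion.1 this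
  exact ⟨w, hw, k, hwk.symm⟩

lemma tau_injOn {W : Set ℝ} (hW : IsRegularizedWaveletSet W) : InjOn tau W := by
  intro a ha b hb hab
  obtain ⟨m, hm⟩ := tau_spec a
  obtain ⟨n, hn⟩ := tau_spec b
  by_cases hmn : m = n
  · subst hmn
    have : a + 2*π*m = b + 2*π*m := by rw [← hm, ← hn, hab]
    linarith
  · exfalso
    have hd := hW.2.1.2 hmn
    have h1 : tau a ∈ (fun x : ℝ => x + 2*π*(m:ℝ)) '' W := ⟨a, ha, hm.symm⟩
    have h2 : tau a ∈ (fun x : ℝ => x + 2*π*(n:ℝ)) '' W := ⟨b, hb, by simp only []; rw [← hn, hab]⟩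
    exact Set.disjoint_left.1 hd h1 h2

lemma tau_cover {W : Set ℝ} (hW : IsRegularizedWaveletSet W) {e : ℝ} (he : e ∈ E) :
    ∃ w ∈ W, tau w = e := by
  obtain ⟨w, hw, n, hn⟩ := trans_cover hW e
  exact ⟨w, hw, tau_eq_of_mem he (n := -n) (by push_cast; linarith)⟩

lemma delta_injOn {W : Set ℝ} (hW : IsRegularizedWaveletSet W) : InjOn delta W := by
  intro a ha b hb hab
  obtain ⟨i, hi⟩ := delta_spec a
  obtain ⟨j, hj⟩ := delta_spec b
  by_cases hij : i = j
  · subst hij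
    have : (2:ℝ)^i * a = 2^i * b := by rw [← hi, ← hj, hab]
    exact mul_left_cancel₀ (by positivity) this
  · exfalso
    have hd := hW.2.2.2 hij
    have h1 : delta a ∈ (fun x : ℝ => (2:ℝ)^i * x) '' W := ⟨a, ha, hi.symm⟩
    have h2 : delta a ∈ (fun x : ℝ => (2:ℝ)^j * x) '' W := ⟨b, hb, by simp only []; rw [← hj, hab]⟩
    exact Set.disjoint_left.1 hd h1 h2

lemma delta_cover {W : Set ℝ} (hW : IsRegularizedWaveletSet W) {e : ℝ} (he : e ∈ E) :
    ∃ w ∈ W, delta w = e := by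
  obtain ⟨w, hw, k, hk⟩ := dil_cover hW (E_ne_zero he)
  exact ⟨w, hw, delta_eq_of_mem he hk⟩

lemma dinv_mem {W : Set ℝ} (hW : IsRegularizedWaveletSet W) {e : ℝ} (he : e ∈ E) :
    Function.invFunOn delta W e ∈ W ∧ delta (Function.invFunOn delta W e) = e := by
  obtain ⟨w, hw, hwe⟩ := delta_cover hW he
  exact ⟨Function.invFunOn_mem ⟨w, hw, hwe⟩, Function.invFunOn_eq ⟨w, hw, hwe⟩⟩

lemma dinv_eq {W : Set ℝ} (hW : IsRegularizedWaveletSet W) {e w : ℝ} (hw : w ∈ W)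
    (h : delta w = e) : Function.invFunOn delta W e = w := by
  have he : e ∈ E := h ▸ delta_mem_E (fun h0 => zero_not_mem hW (h0 ▸ hw))
  obtain ⟨hm, hd⟩ := dinv_mem hW he
  exact delta_injOn hW hm hw (by rw [hd, h])

lemma tinv_mem {W : Set ℝ} (hW : IsRegularizedWaveletSet W) {e : ℝ} (he : e ∈ E) :
    Function.invFunOn tau W e ∈ W ∧ tau (Function.invFunOn tau W e) = e := by
  obtain ⟨w, hw, hwe⟩ := tau_cover hW he
  exact ⟨Function.invFunOn_mem ⟨w, hw, hwe⟩, Function.invFunOn_eq ⟨w, hw, hwe⟩⟩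

lemma tinv_eq {W : Set ℝ} (hW : IsRegularizedWaveletSet W) {e w : ℝ} (hw : w ∈ W)
    (h : tau w = e) : Function.invFunOn tau W e = w := by
  have he : e ∈ E := h ▸ tau_mem_E w
  obtain ⟨hm, hd⟩ := tinv_mem hW he
  exact tau_injOn hW hm hw (by rw [hd, h])

/-- the explicit inverse of `hIso W` on `[0,1)` -/
def gIso (W : Set ℝ) : ℝ → ℝ :=
  fun s => xiMap (delta (Function.invFunOn tau W (xiInv s)))

lemma hIso_gIso {W : Set ℝ} (hW : IsRegularizedWaveletSet W) {s : ℝ}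
    (hs : s ∈ Ico (0:ℝ) 1) : hIso W (gIso W s) = s ∧ gIso W s ∈ Ico (0:ℝ) 1 := by
  have he : xiInv s ∈ E := xiInv_mem hs
  obtain ⟨hwm, hwt⟩ := tinv_mem hW he
  set w := Function.invFunOn tau W (xiInv s)
  have hw0 : w ≠ 0 := fun h0 => zero_not_mem hW (h0 ▸ hwm)
  have hde : delta w ∈ E := delta_mem_E hw0
  have hg : gIso W s = xiMap (delta w) := rfl
  constructor
  · rw [hg]
    unfold hIso
    rw [xiInv_xiMap hde, dinv_eq hW hwm rfl, hwt, xiMap_xiInv hs]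
  · rw [hg]; exact xiMap_mem hde

lemma gIso_hIso {W : Set ℝ} (hW : IsRegularizedWaveletSet W) {t : ℝ}
    (ht : t ∈ Ico (0:ℝ) 1) : gIso W (hIso W t) = t ∧ hIso W t ∈ Ico (0:ℝ) 1 := by
  have he : xiInv t ∈ E := xiInv_mem ht
  obtain ⟨hwm, hwd⟩ := dinv_mem hW he
  set w := Function.invFunOn delta W (xiInv t)
  have hte : tau w ∈ E := tau_mem_E w
  have hh : hIso W t = xiMap (tau w) := rfl
  constructor
  · rw [hh]
    unfold gIso
    rw [xiInv_xiMap hte, tinv_eq hW hwm rfl, hwd, xiMap_xiInv ht]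
  · rw [hh]; exact xiMap_mem hte

lemma hIso_injOn {W : Set ℝ} (hW : IsRegularizedWaveletSet W) :
    InjOn (hIso W) (Ico (0:ℝ) 1) := fun a ha b hb h => by
  rw [← (gIso_hIso hW ha).1, ← (gIso_hIso hW hb).1, h]

lemma invFunOn_hIso_eq {W : Set ℝ} (hW : IsRegularizedWaveletSet W) {s : ℝ}
    (hs : s ∈ Ico (0:ℝ) 1) :
    Function.invFunOn (hIso W) (Ico (0:ℝ) 1) s = gIso W s := by
  obtain ⟨hgs, hgm⟩ := hIso_gIso hW hs
  have hex : ∃ a ∈ Ico (0:ℝ) 1, hIso W a = s := ⟨gIso W s, hgm, hgs⟩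
  exact hIso_injOn hW (Function.invFunOn_mem hex) hgm
    (by rw [Function.invFunOn_eq hex, hgs])

/-! ### Measure transport -/

/-- The dilation-invariant measure `|x|⁻¹ dx`. -/
def rho : Measure ℝ := volume.withDensity (fun x => ENNReal.ofReal |x|⁻¹)

lemma dens_measurable : Measurable (fun x : ℝ => ENNReal.ofReal |x|⁻¹) :=
  (measurable_id.abs.inv).ennreal_ofReal

lemma measurable_mulc (c : ℝ) : Measurable (fun x : ℝ => c*x) :=
  measurable_id.const_mul c

lemma measurable_addc (b : ℝ) : Measurable (fun x : ℝ => x + b) :=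
  measurable_id.add_const b

lemma image_mul_eq_preimage {c : ℝ} (hc : c ≠ 0) (S : Set ℝ) :
    (fun y : ℝ => c*y) '' S = (fun y : ℝ => c⁻¹*y) ⁻¹' S := by
  ext y
  simp only [mem_image, mem_preimage]
  constructor
  · rintro ⟨x, hx, rfl⟩
    rwa [← mul_assoc, inv_mul_cancel₀ hc, one_mul]
  · intro h
    exact ⟨c⁻¹*y, h, by rw [← mul_assoc, mul_inv_cancel₀ hc, one_mul]⟩

lemma image_add_eq_preimage (b : ℝ) (S : Set ℝ) :
    (fun y : ℝ => y + b) '' S = (fun y : ℝ => y - b) ⁻¹' S := by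
  ext y
  simp only [mem_image, mem_preimage]
  constructor
  · rintro ⟨x, hx, rfl⟩
    simpa using hx
  · intro h
    exact ⟨y - b, h, by ring⟩

lemma me_add (b : ℝ) : MeasurableEmbedding (fun x : ℝ => x + b) := by
  refine ⟨fun a a' h => by simpa using h, measurable_addc b, fun s hs => ?_⟩
  rw [image_add_eq_preimage]
  exact (measurable_id.sub_const b) hs

lemma me_mul {c : ℝ} (hc : c ≠ 0) : MeasurableEmbedding (fun x : ℝ => c*x) := by
  refine ⟨fun a a' h => mul_left_cancel₀ hc h, measurable_mulc c, fun s hs => ?_⟩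
  rw [image_mul_eq_preimage hc]
  exact (measurable_mulc c⁻¹) hs

lemma lintegral_image_mul {c : ℝ} (hc : c ≠ 0) {S : Set ℝ} (hS : MeasurableSet S)
    {f : ℝ → ENNReal} (hf : Measurable f) :
    ∫⁻ x in (fun y : ℝ => c*y) '' S, f x = ENNReal.ofReal |c| * ∫⁻ y in S, f (c*y) := by
  have hmap : Measure.map (fun y : ℝ => c⁻¹*y) volume = ENNReal.ofReal |c| • volume := by
    rw [Real.map_volume_mul_left (inv_ne_zero hc), inv_inv]
  have key := setLIntegral_map (μ := volume) hS
      (f := fun y => f (c*y)) (g := fun y : ℝ => c⁻¹*y)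
      (hf.comp (measurable_mulc c)) (measurable_mulc c⁻¹)
  rw [hmap, Measure.restrict_smul, lintegral_smul_measure] at key
  have hsimp : ∀ x : ℝ, f (c*(c⁻¹*x)) = f x := fun x => by
    rw [← mul_assoc, mul_inv_cancel₀ hc, one_mul]
  calc ∫⁻ x in (fun y : ℝ => c*y) '' S, f x
      = ∫⁻ x in (fun y : ℝ => c⁻¹*y) ⁻¹' S, f x := by rw [image_mul_eq_preimage hc]
    _ = ∫⁻ x in (fun y : ℝ => c⁻¹*y) ⁻¹' S, f (c*(c⁻¹*x)) := by
        exact lintegral_congr (fun x => (hsimp x).symm)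
    _ = ENNReal.ofReal |c| * ∫⁻ y in S, f (c*y) := key.symm

lemma lintegral_image_add (b : ℝ) {S : Set ℝ} (hS : MeasurableSet S)
    {f : ℝ → ENNReal} (hf : Measurable f) :
    ∫⁻ x in (fun y : ℝ => y + b) '' S, f x = ∫⁻ y in S, f (y + b) := by
  have hmap : Measure.map (fun y : ℝ => y + -b) volume = volume :=
    map_add_right_eq_self volume (-b)
  have key := setLIntegral_map (μ := volume) hS
      (f := fun y => f (y + b)) (g := fun y : ℝ => y + -b)
      (hf.comp (measurable_addc b)) (measurable_addc (-b))
  rw [hmap] at key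
  have himg : (fun y : ℝ => y + b) '' S = (fun y : ℝ => y + -b) ⁻¹' S := by
    rw [image_add_eq_preimage]; rfl
  calc ∫⁻ x in (fun y : ℝ => y + b) '' S, f x
      = ∫⁻ x in (fun y : ℝ => y + -b) ⁻¹' S, f x := by rw [himg]
    _ = ∫⁻ x in (fun y : ℝ => y + -b) ⁻¹' S, f ((x + -b) + b) := by
        exact lintegral_congr (fun x => by ring_nf)
    _ = ∫⁻ y in S, f (y + b) := key.symm

lemma rho_apply {S : Set ℝ} (hS : MeasurableSet S) :
    rho S = ∫⁻ x in S, ENNReal.ofReal |x|⁻¹ := withDensity_apply _ hS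

lemma rho_map_mul {c : ℝ} (hc : c ≠ 0) :
    Measure.map (fun x : ℝ => c*x) rho = rho := by
  ext S hS
  rw [Measure.map_apply (measurable_mulc c) hS]
  have hpre : (fun x : ℝ => c*x) ⁻¹' S = (fun y : ℝ => c⁻¹*y) '' S := by
    rw [image_mul_eq_preimage (inv_ne_zero hc), inv_inv]
  have hpm : MeasurableSet ((fun x : ℝ => c*x) ⁻¹' S) := (measurable_mulc c) hS
  rw [rho_apply hpm, hpre, lintegral_image_mul (inv_ne_zero hc) hS dens_measurable,
    rho_apply hS, ← lintegral_const_mul _ (show Measurable fun y : ℝ => ENNReal.ofReal |c⁻¹ * y|⁻¹ from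
      ((measurable_mulc c⁻¹).abs.inv).ennreal_ofReal)]
  refine setLIntegral_congr_fun hS (fun y _ => ?_)
  rw [← ENNReal.ofReal_mul (abs_nonneg _)]
  congr 1
  rw [abs_mul, mul_inv, abs_inv, ← mul_assoc, mul_inv_cancel₀ (by simpa using hc), one_mul]

/-- Generic piecewise transport of a measure under an injective piecewise-defined map. -/
lemma piecewise_image_measure {μ : Measure ℝ} (f : ℝ → ℝ) (idx : ℝ → ℤ)
    (hidx : Measurable idx) (g : ℤ → ℝ → ℝ)
    (hg : ∀ k, MeasurableEmbedding (g k))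
    (hgμ : ∀ k, Measure.map (g k) μ = μ)
    (hfg : ∀ x, f x = g (idx x) x)
    {A : Set ℝ} (hA : MeasurableSet A) (hinj : InjOn f A) :
    MeasurableSet (f '' A) ∧ μ (f '' A) = μ A := by
  set P : ℤ → Set ℝ := fun k => A ∩ idx ⁻¹' {k} with hP
  have hPm : ∀ k, MeasurableSet (P k) := fun k => hA.inter (hidx (measurableSet_singleton k))
  have himg : f '' A = ⋃ k, g k '' (P k) := by
    ext y
    simp only [mem_image, mem_iUnion]
    constructor
    · rintro ⟨x, hx, rfl⟩
      exact ⟨idx x, x, ⟨hx, rfl⟩, (hfg x).symm⟩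
    · rintro ⟨k, x, ⟨hx, hk⟩, rfl⟩
      have hk' : idx x = k := hk
      exact ⟨x, hx, by rw [hfg x, hk']⟩
  have hgim : ∀ k, MeasurableSet (g k '' (P k)) :=
    fun k => (hg k).measurableSet_image' (hPm k)
  have hdis : Pairwise (Function.onFun Disjoint fun k => g k '' (P k)) := by
    intro k l hkl
    simp only [Function.onFun]
    rw [Set.disjoint_left]
    rintro y ⟨x, ⟨hxA, hxk⟩, rfl⟩ ⟨x', ⟨hxA', hxl⟩, hx'⟩
    have hk' : idx x = k := hxk
    have hl' : idx x' = l := hxl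
    have h1 : f x = g k x := by rw [hfg, hk']
    have h2 : f x' = g l x' := by rw [hfg, hl']
    have hxx : f x' = f x := by rw [h1, h2, hx']
    have := hinj hxA' hxA hxx
    exact hkl (by rw [← hk', ← hl', this])
  have hμk : ∀ k, μ (g k '' P k) = μ (P k) := fun k => by
    calc μ (g k '' P k) = (Measure.map (g k) μ) (g k '' P k) := by rw [hgμ k]
      _ = μ ((g k) ⁻¹' (g k '' P k)) := (hg k).map_apply μ _
      _ = μ (P k) := by rw [preimage_image_eq _ (hg k).injective]
  have hPdis : Pairwise (Function.onFun Disjoint P) := by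
    intro k l hkl
    simp only [Function.onFun, hP]
    rw [Set.disjoint_left]
    rintro x ⟨_, hxk⟩ ⟨_, hxl⟩
    exact hkl (by rw [← show idx x = k from hxk, ← show idx x = l from hxl])
  have hcover : (⋃ k, P k) = A := by
    ext x
    simp only [mem_iUnion, hP, mem_inter_iff, mem_preimage, mem_singleton_iff]
    exact ⟨fun ⟨k, h, _⟩ => h, fun h => ⟨idx x, h, rfl⟩⟩
  constructor
  · rw [himg]; exact MeasurableSet.iUnion hgim
  · rw [himg, measure_iUnion hdis hgim]
    simp_rw [hμk]
    rw [← measure_iUnion hPdis hPm, hcover]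

/-! ### tau and delta transport -/

def tauIdx (x : ℝ) : ℤ :=
  if x - 2*π*(⌊x/(2*π)⌋ : ℝ) < π then -⌊x/(2*π)⌋ - 1 else -⌊x/(2*π)⌋

lemma tau_eq_idx (x : ℝ) : tau x = x + 2*π*(tauIdx x : ℝ) := by
  unfold tau tauIdx
  split_ifs <;> push_cast <;> ring

lemma floorcast_measurable : Measurable fun x : ℝ => ((⌊x/(2*π)⌋ : ℤ) : ℝ) :=
  measurable_from_top.comp (Int.measurable_floor.comp (measurable_id.div_const (2*π)))

lemma tauIdx_measurable : Measurable tauIdx := by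
  unfold tauIdx
  refine Measurable.ite ?_ ?_ ?_
  · exact measurableSet_lt (measurable_id.sub (measurable_const.mul floorcast_measurable))
      measurable_const
  · exact ((Int.measurable_floor.comp (measurable_id.div_const (2*π))).neg).sub measurable_const
  · exact (Int.measurable_floor.comp (measurable_id.div_const (2*π))).neg

def dilIdx (x : ℝ) : ℤ :=
  if 0 < x then ⌈Real.logb 2 (π/x)⌉ else ⌊Real.logb 2 (2*π/(-x))⌋

lemma delta_eq_idx (x : ℝ) : delta x = 2^(dilIdx x) * x := by
  unfold delta dilIdx
  split_ifs <;> rfl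

lemma dilIdx_measurable : Measurable dilIdx := by
  have h1 : Measurable fun x : ℝ => Real.logb 2 (π/x) := by
    simp only [Real.logb]
    exact (Real.measurable_log.comp (measurable_const.div measurable_id)).div_const _
  have h2 : Measurable fun x : ℝ => Real.logb 2 (2*π/(-x)) := by
    simp only [Real.logb]
    exact (Real.measurable_log.comp (measurable_const.div measurable_id.neg)).div_const _
  unfold dilIdx
  exact Measurable.ite (measurableSet_lt measurable_const measurable_id)
    (Int.measurable_ceil.comp h1) (Int.measurable_floor.comp h2)

lemma vol_image_tau {A : Set ℝ} (hA : MeasurableSet A) (hinj : InjOn tau A) :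
    MeasurableSet (tau '' A) ∧ volume (tau '' A) = volume A :=
  piecewise_image_measure tau tauIdx tauIdx_measurable
    (fun k x => x + 2*π*(k:ℝ)) (fun k => me_add _)
    (fun k => map_add_right_eq_self volume _) tau_eq_idx hA hinj

lemma rho_image_delta {A : Set ℝ} (hA : MeasurableSet A) (hinj : InjOn delta A) :
    MeasurableSet (delta '' A) ∧ rho (delta '' A) = rho A :=
  piecewise_image_measure delta dilIdx dilIdx_measurable
    (fun k x => (2:ℝ)^k * x) (fun k => me_mul (by positivity))
    (fun k => rho_map_mul (by positivity)) delta_eq_idx hA hinj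

/-! ### symmetric difference identities -/

lemma tau_image_diff_subset {W₁ W₂ : Set ℝ} (h₁ : IsRegularizedWaveletSet W₁)
    (h₂ : IsRegularizedWaveletSet W₂) :
    tau '' (W₁ \ W₂) ⊆ tau '' (W₂ \ W₁) := by
  rintro e ⟨w, ⟨hw1, hw2⟩, rfl⟩
  obtain ⟨w', hw', hw'e⟩ := tau_cover h₂ (tau_mem_E w)
  refine ⟨w', ⟨hw', fun hw'1 => ?_⟩, hw'e⟩
  exact hw2 ((tau_injOn h₁ hw'1 hw1 hw'e) ▸ hw')

lemma tau_image_diff_eq {W₁ W₂ : Set ℝ} (h₁ : IsRegularizedWaveletSet W₁)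
    (h₂ : IsRegularizedWaveletSet W₂) :
    tau '' (W₁ \ W₂) = tau '' (W₂ \ W₁) :=
  Subset.antisymm (tau_image_diff_subset h₁ h₂) (tau_image_diff_subset h₂ h₁)

lemma delta_image_diff_subset {W₁ W₂ : Set ℝ} (h₁ : IsRegularizedWaveletSet W₁)
    (h₂ : IsRegularizedWaveletSet W₂) :
    delta '' (W₁ \ W₂) ⊆ delta '' (W₂ \ W₁) := by
  rintro e ⟨w, ⟨hw1, hw2⟩, rfl⟩
  have hw0 : w ≠ 0 := fun h0 => zero_not_mem h₁ (h0 ▸ hw1)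
  obtain ⟨w', hw', hw'e⟩ := delta_cover h₂ (delta_mem_E hw0)
  refine ⟨w', ⟨hw', fun hw'1 => ?_⟩, hw'e⟩
  exact hw2 ((delta_injOn h₁ hw'1 hw1 hw'e) ▸ hw')

lemma delta_image_diff_eq {W₁ W₂ : Set ℝ} (h₁ : IsRegularizedWaveletSet W₁)
    (h₂ : IsRegularizedWaveletSet W₂) :
    delta '' (W₁ \ W₂) = delta '' (W₂ \ W₁) :=
  Subset.antisymm (delta_image_diff_subset h₁ h₂) (delta_image_diff_subset h₂ h₁)

/-! ### finiteness -/

lemma volume_E_lt_top : volume E < ⊤ := by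
  refine lt_of_le_of_lt (measure_union_le _ _) ?_
  rw [Real.volume_Ico, Real.volume_Ico]
  exact ENNReal.add_lt_top.2 ⟨ENNReal.ofReal_lt_top, ENNReal.ofReal_lt_top⟩

lemma rho_E_lt_top : rho E < ⊤ := by
  have hEm : MeasurableSet E := (measurableSet_Ico).union measurableSet_Ico
  rw [rho_apply hEm]
  calc ∫⁻ x in E, ENNReal.ofReal |x|⁻¹
      ≤ ∫⁻ _x in E, ENNReal.ofReal π⁻¹ := by
        refine setLIntegral_mono measurable_const (fun x hx => ?_)
        exact ENNReal.ofReal_le_ofReal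
          (inv_anti₀ pi_pos (abs_le_of_mem_E hx).1)
    _ = ENNReal.ofReal π⁻¹ * volume E := setLIntegral_const _ _
    _ < ⊤ := ENNReal.mul_lt_top ENNReal.ofReal_lt_top volume_E_lt_top

lemma measurableSet_E : MeasurableSet E := (measurableSet_Ico).union measurableSet_Ico

/-! ### xi transport -/

lemma dens_nu_measurable : Measurable (fun x : ℝ =>
    ENNReal.ofReal (if x ∈ Ico (0:ℝ) (1/2) then (1-x)⁻¹
      else if x ∈ Ico (1/2:ℝ) 1 then x⁻¹ else 0)) := by
  refine Measurable.ennreal_ofReal ?_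
  refine Measurable.ite measurableSet_Ico ((measurable_const.sub measurable_id).inv) ?_
  exact Measurable.ite measurableSet_Ico measurable_id.inv measurable_const

lemma nuMeasure_apply {S : Set ℝ} (hS : MeasurableSet S) :
    nuMeasure S = ∫⁻ x in S,
      ENNReal.ofReal (if x ∈ Ico (0:ℝ) (1/2) then (1-x)⁻¹
        else if x ∈ Ico (1/2:ℝ) 1 then x⁻¹ else 0) :=
  withDensity_apply _ hS

lemma xi_image_decomp {S : Set ℝ} (hsub : S ⊆ E) :
    (S ∩ Iio 0 ⊆ Ico (-(2*π)) (-π)) ∧ (S \ Iio 0 ⊆ Ico π (2*π)) := by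
  constructor
  · rintro x ⟨hxS, hx0⟩
    rcases hsub hxS with h | h
    · exact h
    · exact absurd hx0 (by simp only [mem_Iio, not_lt]; linarith [h.1, pi_pos])
  · rintro x ⟨hxS, hx0⟩
    rcases hsub hxS with h | h
    · exact absurd h.2 (by simp only [mem_Iio, not_lt] at hx0; push_neg; nlinarith [pi_pos])
    · exact h

lemma xi_image_neg_eq {S : Set ℝ} (hsub : S ⊆ Ico (-(2*π)) (-π)) :
    xiMap '' S = (fun y : ℝ => y + 1) '' ((fun y : ℝ => (2*π)⁻¹ * y) '' S) := by
  rw [← Set.image_comp]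
  refine Set.image_congr (fun x hx => ?_)
  rw [(xiMap_neg (hsub hx)).1]
  simp only [Function.comp_apply]
  rw [div_eq_inv_mul]

lemma xi_image_pos_eq {S : Set ℝ} (hsub : S ⊆ Ico π (2*π)) :
    xiMap '' S = (fun y : ℝ => (2*π)⁻¹ * y) '' S := by
  refine Set.image_congr (fun x hx => ?_)
  rw [(xiMap_pos (hsub hx)).1, div_eq_inv_mul]

lemma half_eq : (2*π)⁻¹ * π = 1/2 := by
  rw [mul_comm, ← div_eq_mul_inv]
  rw [div_eq_iff (ne_of_gt Real.two_pi_pos)]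
  ring

lemma nu_xi_neg {S : Set ℝ} (hS : MeasurableSet S) (hsub : S ⊆ Ico (-(2*π)) (-π)) :
    MeasurableSet (xiMap '' S) ∧ nuMeasure (xiMap '' S) = rho S := by
  have h2π := Real.two_pi_pos
  have hc : (0:ℝ) < (2*π)⁻¹ := inv_pos.2 h2π
  have hc0 : (2*π)⁻¹ ≠ 0 := ne_of_gt hc
  have himg := xi_image_neg_eq hsub
  have hSm' : MeasurableSet ((fun y : ℝ => (2*π)⁻¹ * y) '' S) :=
    (me_mul hc0).measurableSet_image' hS
  have hTm : MeasurableSet (xiMap '' S) := by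
    rw [himg]; exact (me_add 1).measurableSet_image' hSm'
  refine ⟨hTm, ?_⟩
  rw [nuMeasure_apply hTm, himg, lintegral_image_add 1 hSm' dens_nu_measurable,
    lintegral_image_mul (c := (2*π)⁻¹) hc0 hS
      (f := fun y => ENNReal.ofReal (if y + 1 ∈ Ico (0:ℝ) (1/2) then (1-(y+1))⁻¹
          else if y + 1 ∈ Ico (1/2:ℝ) 1 then (y+1)⁻¹ else 0))
      (dens_nu_measurable.comp (measurable_addc 1)),
    rho_apply hS,
    ← lintegral_const_mul _ (show Measurable fun y : ℝ =>
        ENNReal.ofReal (if (2*π)⁻¹*y + 1 ∈ Ico (0:ℝ) (1/2) then (1-((2*π)⁻¹*y+1))⁻¹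
          else if (2*π)⁻¹*y + 1 ∈ Ico (1/2:ℝ) 1 then ((2*π)⁻¹*y+1)⁻¹ else 0) from
      dens_nu_measurable.comp ((measurable_mulc _).add_const 1))]
  refine setLIntegral_congr_fun hS (fun y hy => ?_)
  obtain ⟨hy1, hy2⟩ := hsub hy
  have hyneg : y < 0 := lt_of_lt_of_le hy2 (by linarith [pi_pos])
  have hone : (2*π)⁻¹ * (2*π) = 1 := inv_mul_cancel₀ (ne_of_gt h2π)
  have hm1 : (2*π)⁻¹*y + 1 ∈ Ico (0:ℝ) (1/2) := by
    constructor
    · have := mul_le_mul_of_nonneg_left hy1 hc.le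
      nlinarith
    · have := mul_lt_mul_of_pos_left hy2 hc
      nlinarith [half_eq]
  rw [if_pos hm1, ← ENNReal.ofReal_mul (abs_nonneg _)]
  congr 1
  rw [abs_of_pos hc, abs_of_neg hyneg]
  have hy0 : y ≠ 0 := ne_of_lt hyneg
  field_simp
  rw [show 2*π - (y + 2*π) = -y by ring, div_neg, div_self hy0]

lemma nu_xi_pos {S : Set ℝ} (hS : MeasurableSet S) (hsub : S ⊆ Ico π (2*π)) :
    MeasurableSet (xiMap '' S) ∧ nuMeasure (xiMap '' S) = rho S := by
  have h2π := Real.two_pi_pos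
  have hc : (0:ℝ) < (2*π)⁻¹ := inv_pos.2 h2π
  have hc0 : (2*π)⁻¹ ≠ 0 := ne_of_gt hc
  have himg := xi_image_pos_eq hsub
  have hTm : MeasurableSet (xiMap '' S) := by
    rw [himg]; exact (me_mul hc0).measurableSet_image' hS
  refine ⟨hTm, ?_⟩
  rw [nuMeasure_apply hTm, himg,
    lintegral_image_mul hc0 hS dens_nu_measurable,
    rho_apply hS,
    ← lintegral_const_mul _ (show Measurable fun y : ℝ =>
        ENNReal.ofReal (if (2*π)⁻¹*y ∈ Ico (0:ℝ) (1/2) then (1-(2*π)⁻¹*y)⁻¹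
          else if (2*π)⁻¹*y ∈ Ico (1/2:ℝ) 1 then ((2*π)⁻¹*y)⁻¹ else 0) from
      dens_nu_measurable.comp (measurable_mulc _))]
  refine setLIntegral_congr_fun hS (fun y hy => ?_)
  obtain ⟨hy1, hy2⟩ := hsub hy
  have hypos : 0 < y := lt_of_lt_of_le pi_pos hy1
  have hone : (2*π)⁻¹ * (2*π) = 1 := inv_mul_cancel₀ (ne_of_gt h2π)
  have hm2 : (2*π)⁻¹*y ∈ Ico (1/2:ℝ) 1 := by
    constructor
    · have := mul_le_mul_of_nonneg_left hy1 hc.le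
      nlinarith [half_eq]
    · have := mul_lt_mul_of_pos_left hy2 hc
      nlinarith
  have hm1 : (2*π)⁻¹*y ∉ Ico (0:ℝ) (1/2) := by
    rintro ⟨_, hlt⟩
    exact absurd hm2.1 (by linarith)
  rw [if_neg hm1, if_pos hm2, ← ENNReal.ofReal_mul (abs_nonneg _)]
  congr 1
  rw [abs_of_pos hc, abs_of_pos hypos]
  have hy0 : y ≠ 0 := ne_of_gt hypos
  field_simp

lemma vol_xi_neg {S : Set ℝ} (hS : MeasurableSet S) (hsub : S ⊆ Ico (-(2*π)) (-π)) :
    volume (xiMap '' S) = ENNReal.ofReal (2*π)⁻¹ * volume S := by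
  have hc : (0:ℝ) < (2*π)⁻¹ := inv_pos.2 Real.two_pi_pos
  have hc0 : (2*π)⁻¹ ≠ 0 := ne_of_gt hc
  have himg := xi_image_neg_eq hsub
  have hSm' : MeasurableSet ((fun y : ℝ => (2*π)⁻¹ * y) '' S) :=
    (me_mul hc0).measurableSet_image' hS
  have hTm : MeasurableSet (xiMap '' S) := by
    rw [himg]; exact (me_add 1).measurableSet_image' hSm'
  rw [← setLIntegral_one, himg, lintegral_image_add 1 hSm' measurable_const,
    lintegral_image_mul hc0 hS measurable_const, setLIntegral_one, abs_of_pos hc]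

lemma vol_xi_pos {S : Set ℝ} (hS : MeasurableSet S) (hsub : S ⊆ Ico π (2*π)) :
    volume (xiMap '' S) = ENNReal.ofReal (2*π)⁻¹ * volume S := by
  have hc : (0:ℝ) < (2*π)⁻¹ := inv_pos.2 Real.two_pi_pos
  have hc0 : (2*π)⁻¹ ≠ 0 := ne_of_gt hc
  have himg := xi_image_pos_eq hsub
  rw [← setLIntegral_one, himg, lintegral_image_mul hc0 hS measurable_const,
    setLIntegral_one, abs_of_pos hc]

lemma xi_transport {S : Set ℝ} (hS : MeasurableSet S) (hsub : S ⊆ E) :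
    MeasurableSet (xiMap '' S) ∧ nuMeasure (xiMap '' S) = rho S ∧
    volume (xiMap '' S) = ENNReal.ofReal (2*π)⁻¹ * volume S := by
  obtain ⟨hdn, hdp⟩ := xi_image_decomp hsub
  have hSn : MeasurableSet (S ∩ Iio 0) := hS.inter measurableSet_Iio
  have hSp : MeasurableSet (S \ Iio 0) := hS.diff measurableSet_Iio
  have hU : S = (S ∩ Iio 0) ∪ (S \ Iio 0) := (inter_union_diff S _).symm
  have himg : xiMap '' S = xiMap '' (S ∩ Iio 0) ∪ xiMap '' (S \ Iio 0) := by
    conv_lhs => rw [hU]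
    exact image_union _ _ _
  obtain ⟨hmn, hnn⟩ := nu_xi_neg hSn hdn
  obtain ⟨hmp, hnp⟩ := nu_xi_pos hSp hdp
  have hvn := vol_xi_neg hSn hdn
  have hvp := vol_xi_pos hSp hdp
  have hsubn : xiMap '' (S ∩ Iio 0) ⊆ Ico (0:ℝ) (1/2) := by
    rintro t ⟨x, hx, rfl⟩; exact (xiMap_neg (hdn hx)).2
  have hsubp : xiMap '' (S \ Iio 0) ⊆ Ico (1/2:ℝ) 1 := by
    rintro t ⟨x, hx, rfl⟩; exact (xiMap_pos (hdp hx)).2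
  have hdisj : Disjoint (xiMap '' (S ∩ Iio 0)) (xiMap '' (S \ Iio 0)) := by
    rw [Set.disjoint_left]
    intro t h1 h2
    linarith [(hsubn h1).2, (hsubp h2).1]
  have hdisjS : Disjoint (S ∩ Iio 0) (S \ Iio 0) := by
    rw [Set.disjoint_left]
    rintro x ⟨_, hx0⟩ ⟨_, hx0'⟩
    exact hx0' hx0
  refine ⟨by rw [himg]; exact hmn.union hmp, ?_, ?_⟩
  · rw [himg, measure_union hdisj hmp, hnn, hnp]
    conv_rhs => rw [hU]
    rw [measure_union hdisjS hSp]
  · rw [himg, measure_union hdisj hmp, hvn, hvp]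
    conv_rhs => rw [hU]
    rw [measure_union hdisjS hSp, mul_add]

/-! ### identification of the disagreement sets -/

lemma solve_w {w₁ w₂ : ℝ} (hne : w₁ ≠ w₂) {j k n : ℤ}
    (hd : (2:ℝ)^j * w₁ = 2^k * w₂) (ht : w₂ = w₁ + 2*π*(n:ℝ)) :
    w₁ = 2^k*(2*π*(n:ℝ)) / ((2:ℝ)^j - 2^k) := by
  have hjk : j ≠ k := by
    rintro rfl
    exact hne (mul_left_cancel₀ (show (2:ℝ)^j ≠ 0 by positivity) hd)
  have hz : (2:ℝ)^j - 2^k ≠ 0 := by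
    intro h
    have he : (2:ℝ)^j = 2^k := by linarith
    exact hjk (le_antisymm
      ((zpow_le_zpow_iff_right₀ (by norm_num : (1:ℝ) < 2)).1 (le_of_eq he))
      ((zpow_le_zpow_iff_right₀ (by norm_num : (1:ℝ) < 2)).1 (le_of_eq he.symm)))
  rw [eq_div_iff hz]
  have h2 : (2:ℝ)^j * w₁ = 2^k * w₁ + 2^k*(2*π*(n:ℝ)) := by rw [hd, ht]; ring
  linear_combination h2

lemma xiD_eq {W₁ W₂ : Set ℝ} (h₁ : IsRegularizedWaveletSet W₁)
    (h₂ : IsRegularizedWaveletSet W₂) :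
    xiMap '' (delta '' (W₁ \ W₂)) =
      {t ∈ Ico (0:ℝ) 1 |
        Function.invFunOn delta W₁ (xiInv t) ≠ Function.invFunOn delta W₂ (xiInv t)} := by
  ext t
  constructor
  · rintro ⟨e, ⟨w, ⟨hw1, hw2⟩, rfl⟩, rfl⟩
    have hw0 : w ≠ 0 := fun h0 => zero_not_mem h₁ (h0 ▸ hw1)
    have he : delta w ∈ E := delta_mem_E hw0
    refine ⟨xiMap_mem he, ?_⟩
    rw [xiInv_xiMap he, dinv_eq h₁ hw1 rfl]
    intro hcontr
    exact hw2 (hcontr ▸ (dinv_mem h₂ he).1)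
  · rintro ⟨ht, hne⟩
    have he : xiInv t ∈ E := xiInv_mem ht
    obtain ⟨hm1, hd1⟩ := dinv_mem h₁ he
    refine ⟨xiInv t, ⟨Function.invFunOn delta W₁ (xiInv t), ⟨hm1, ?_⟩, hd1⟩,
      xiMap_xiInv ht⟩
    intro hw2
    exact hne (dinv_eq h₂ hw2 hd1).symm

lemma xiT_eq {W₁ W₂ : Set ℝ} (h₁ : IsRegularizedWaveletSet W₁)
    (h₂ : IsRegularizedWaveletSet W₂) :
    xiMap '' (tau '' (W₁ \ W₂)) =
      {t ∈ Ico (0:ℝ) 1 |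
        Function.invFunOn tau W₁ (xiInv t) ≠ Function.invFunOn tau W₂ (xiInv t)} := by
  ext t
  constructor
  · rintro ⟨e, ⟨w, ⟨hw1, hw2⟩, rfl⟩, rfl⟩
    have he : tau w ∈ E := tau_mem_E w
    refine ⟨xiMap_mem he, ?_⟩
    rw [xiInv_xiMap he, tinv_eq h₁ hw1 rfl]
    intro hcontr
    exact hw2 (hcontr ▸ (tinv_mem h₂ he).1)
  · rintro ⟨ht, hne⟩
    have he : xiInv t ∈ E := xiInv_mem ht
    obtain ⟨hm1, hd1⟩ := tinv_mem h₁ he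
    refine ⟨xiInv t, ⟨Function.invFunOn tau W₁ (xiInv t), ⟨hm1, ?_⟩, hd1⟩,
      xiMap_xiInv ht⟩
    intro hw2
    exact hne (tinv_eq h₂ hw2 hd1).symm

/-! ### a.e. identification -/

lemma omega_subset_xiD {W₁ W₂ : Set ℝ} (h₁ : IsRegularizedWaveletSet W₁)
    (h₂ : IsRegularizedWaveletSet W₂) :
    {t ∈ Ico (0:ℝ) 1 | hIso W₁ t ≠ hIso W₂ t} ⊆ xiMap '' (delta '' (W₁ \ W₂)) := by
  rintro t ⟨ht, hne⟩
  rw [xiD_eq h₁ h₂]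
  refine ⟨ht, fun heq => hne ?_⟩
  unfold hIso
  rw [heq]

lemma xiD_diff_omega_countable {W₁ W₂ : Set ℝ} (h₁ : IsRegularizedWaveletSet W₁)
    (h₂ : IsRegularizedWaveletSet W₂) :
    ((xiMap '' (delta '' (W₁ \ W₂))) \
      {t ∈ Ico (0:ℝ) 1 | hIso W₁ t ≠ hIso W₂ t}).Countable := by
  refine Set.Countable.mono ?_ (countable_range
    (fun p : ℤ×ℤ×ℤ => xiMap (delta
      ((2:ℝ)^p.2.1*(2*π*(p.2.2:ℝ))/((2:ℝ)^p.1 - (2:ℝ)^p.2.1)))))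
  rintro t ⟨hmem, hnot⟩
  rw [xiD_eq h₁ h₂] at hmem
  obtain ⟨ht, hne⟩ := hmem
  have heq : hIso W₁ t = hIso W₂ t := by
    by_contra h
    exact hnot ⟨ht, h⟩
  have he : xiInv t ∈ E := xiInv_mem ht
  obtain ⟨hx₁, hd₁⟩ := dinv_mem h₁ he
  obtain ⟨hx₂, hd₂⟩ := dinv_mem h₂ he
  have htau : tau (Function.invFunOn delta W₁ (xiInv t))
      = tau (Function.invFunOn delta W₂ (xiInv t)) :=
    xiMap_injOn (tau_mem_E _) (tau_mem_E _) heq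
  obtain ⟨m₁, hm₁⟩ := tau_spec (Function.invFunOn delta W₁ (xiInv t))
  obtain ⟨m₂, hm₂⟩ := tau_spec (Function.invFunOn delta W₂ (xiInv t))
  have ht2 : Function.invFunOn delta W₂ (xiInv t)
      = Function.invFunOn delta W₁ (xiInv t) + 2*π*((m₁ - m₂ : ℤ):ℝ) := by
    push_cast
    have := htau
    rw [hm₁, hm₂] at this
    linarith
  obtain ⟨j, hj⟩ := delta_spec (Function.invFunOn delta W₁ (xiInv t))
  obtain ⟨k, hk⟩ := delta_spec (Function.invFunOn delta W₂ (xiInv t))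
  have hdd : (2:ℝ)^j * Function.invFunOn delta W₁ (xiInv t)
      = 2^k * Function.invFunOn delta W₂ (xiInv t) := by
    rw [← hj, ← hk, hd₁, hd₂]
  have hw := solve_w hne hdd ht2
  refine ⟨(j, k, m₁ - m₂), ?_⟩
  simp only []
  rw [← hw, hd₁, xiMap_xiInv ht]

lemma omega'_set_eq {W₁ W₂ : Set ℝ} (h₁ : IsRegularizedWaveletSet W₁)
    (h₂ : IsRegularizedWaveletSet W₂) :
    {t ∈ Ico (0:ℝ) 1 |
        Function.invFunOn (hIso W₁) (Ico (0:ℝ) 1) t ≠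
          Function.invFunOn (hIso W₂) (Ico (0:ℝ) 1) t} =
      {t ∈ Ico (0:ℝ) 1 | gIso W₁ t ≠ gIso W₂ t} := by
  ext t
  simp only [mem_setOf_eq, and_congr_right_iff]
  intro ht
  rw [invFunOn_hIso_eq h₁ ht, invFunOn_hIso_eq h₂ ht]

lemma omega'_subset_xiT {W₁ W₂ : Set ℝ} (h₁ : IsRegularizedWaveletSet W₁)
    (h₂ : IsRegularizedWaveletSet W₂) :
    {t ∈ Ico (0:ℝ) 1 | gIso W₁ t ≠ gIso W₂ t} ⊆ xiMap '' (tau '' (W₁ \ W₂)) := by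
  rintro t ⟨ht, hne⟩
  rw [xiT_eq h₁ h₂]
  refine ⟨ht, fun heq => hne ?_⟩
  unfold gIso
  rw [heq]

lemma xiT_diff_omega'_countable {W₁ W₂ : Set ℝ} (h₁ : IsRegularizedWaveletSet W₁)
    (h₂ : IsRegularizedWaveletSet W₂) :
    ((xiMap '' (tau '' (W₁ \ W₂))) \
      {t ∈ Ico (0:ℝ) 1 | gIso W₁ t ≠ gIso W₂ t}).Countable := by
  refine Set.Countable.mono ?_ (countable_range
    (fun p : ℤ×ℤ×ℤ => xiMap (tau
      ((2:ℝ)^p.2.1*(2*π*(p.2.2:ℝ))/((2:ℝ)^p.1 - (2:ℝ)^p.2.1)))))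
  rintro t ⟨hmem, hnot⟩
  rw [xiT_eq h₁ h₂] at hmem
  obtain ⟨ht, hne⟩ := hmem
  have heq : gIso W₁ t = gIso W₂ t := by
    by_contra h
    exact hnot ⟨ht, h⟩
  have he : xiInv t ∈ E := xiInv_mem ht
  obtain ⟨hx₁, hd₁⟩ := tinv_mem h₁ he
  obtain ⟨hx₂, hd₂⟩ := tinv_mem h₂ he
  have hw₁0 : Function.invFunOn tau W₁ (xiInv t) ≠ 0 :=
    fun h0 => zero_not_mem h₁ (h0 ▸ hx₁)
  have hw₂0 : Function.invFunOn tau W₂ (xiInv t) ≠ 0 :=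
    fun h0 => zero_not_mem h₂ (h0 ▸ hx₂)
  have hdel : delta (Function.invFunOn tau W₁ (xiInv t))
      = delta (Function.invFunOn tau W₂ (xiInv t)) :=
    xiMap_injOn (delta_mem_E hw₁0) (delta_mem_E hw₂0) heq
  obtain ⟨m₁, hm₁⟩ := tau_spec (Function.invFunOn tau W₁ (xiInv t))
  obtain ⟨m₂, hm₂⟩ := tau_spec (Function.invFunOn tau W₂ (xiInv t))
  have ht2 : Function.invFunOn tau W₂ (xiInv t)
      = Function.invFunOn tau W₁ (xiInv t) + 2*π*((m₁ - m₂ : ℤ):ℝ) := by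
    push_cast
    have h1 := hd₁
    have h2 := hd₂
    rw [hm₁] at h1
    rw [hm₂] at h2
    linarith
  obtain ⟨j, hj⟩ := delta_spec (Function.invFunOn tau W₁ (xiInv t))
  obtain ⟨k, hk⟩ := delta_spec (Function.invFunOn tau W₂ (xiInv t))
  have hdd : (2:ℝ)^j * Function.invFunOn tau W₁ (xiInv t)
      = 2^k * Function.invFunOn tau W₂ (xiInv t) := by
    rw [← hj, ← hk, hdel]
  have hw := solve_w hne hdd ht2
  refine ⟨(j, k, m₁ - m₂), ?_⟩
  simp only []
  rw [← hw, hd₁, xiMap_xiInv ht]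

/-! ### measures of the disagreement sets -/

lemma nu_omega {W₁ W₂ : Set ℝ} (h₁ : IsRegularizedWaveletSet W₁)
    (h₂ : IsRegularizedWaveletSet W₂) :
    nuMeasure {t ∈ Ico (0:ℝ) 1 | hIso W₁ t ≠ hIso W₂ t} = rho (delta '' (W₁ \ W₂)) := by
  have hAm : MeasurableSet (W₁ \ W₂) := h₁.1.diff h₂.1
  obtain ⟨hDm, _⟩ := rho_image_delta hAm ((delta_injOn h₁).mono diff_subset)
  have hDE : delta '' (W₁ \ W₂) ⊆ E := by
    rintro e ⟨w, ⟨hw1, _⟩, rfl⟩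
    exact delta_mem_E (fun h0 => zero_not_mem h₁ (h0 ▸ hw1))
  obtain ⟨hXm, hnu, _⟩ := xi_transport hDm hDE
  rw [← hnu]
  refine measure_congr (ae_eq_set.2 ⟨?_, ?_⟩)
  · rw [diff_eq_empty.2 (omega_subset_xiD h₁ h₂)]
    exact measure_empty
  · exact (withDensity_absolutelyContinuous volume _)
      ((xiD_diff_omega_countable h₁ h₂).measure_zero volume)

lemma vol_omega' {W₁ W₂ : Set ℝ} (h₁ : IsRegularizedWaveletSet W₁)
    (h₂ : IsRegularizedWaveletSet W₂) :
    volume {t ∈ Ico (0:ℝ) 1 |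
        Function.invFunOn (hIso W₁) (Ico (0:ℝ) 1) t ≠
          Function.invFunOn (hIso W₂) (Ico (0:ℝ) 1) t} =
      ENNReal.ofReal (2*π)⁻¹ * volume (tau '' (W₁ \ W₂)) := by
  have hAm : MeasurableSet (W₁ \ W₂) := h₁.1.diff h₂.1
  obtain ⟨hTm, _⟩ := vol_image_tau hAm ((tau_injOn h₁).mono diff_subset)
  have hTE : tau '' (W₁ \ W₂) ⊆ E := by
    rintro e ⟨w, _, rfl⟩
    exact tau_mem_E w
  obtain ⟨hXm, _, hvol⟩ := xi_transport hTm hTE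
  rw [omega'_set_eq h₁ h₂, ← hvol]
  refine measure_congr (ae_eq_set.2 ⟨?_, ?_⟩)
  · rw [diff_eq_empty.2 (omega'_subset_xiT h₁ h₂)]
    exact measure_empty
  · exact (xiT_diff_omega'_countable h₁ h₂).measure_zero volume

lemma integral_inv_abs {S : Set ℝ} (hS : MeasurableSet S) :
    ∫ x in S, |x|⁻¹ = (rho S).toReal := by
  rw [integral_eq_lintegral_of_nonneg_ae
    (Filter.Eventually.of_forall (fun x => by positivity))
    ((show Measurable fun x : ℝ => |x|⁻¹ from measurable_id.abs.inv).aestronglyMeasurable),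
    ← rho_apply hS]


/-- For regularized wavelet sets `W₁, W₂` with induced isomorphisms `h₁, h₂`,
`ω = {h₁ ≠ h₂}` and `ω' = {h₁⁻¹ ≠ h₂⁻¹}` (within `[0,1)`), one has
`d(W₁,W₂) = (4π μ(ω'))^{1/2} + (2 ν(ω))^{1/2}`. -/
theorem dws_eq_formula (W₁ W₂ : Set ℝ)
    (h₁ : IsRegularizedWaveletSet W₁) (h₂ : IsRegularizedWaveletSet W₂) :
    dws W₁ W₂ =
      Real.sqrt (4*π *
        (volume {x ∈ Ico (0:ℝ) 1 |
          Function.invFunOn (hIso W₁) (Ico (0:ℝ) 1) x ≠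
            Function.invFunOn (hIso W₂) (Ico (0:ℝ) 1) x}).toReal) +
      Real.sqrt (2 * (nuMeasure {x ∈ Ico (0:ℝ) 1 | hIso W₁ x ≠ hIso W₂ x}).toReal) := by
  have hAm : MeasurableSet (W₁ \ W₂) := h₁.1.diff h₂.1
  have hBm : MeasurableSet (W₂ \ W₁) := h₂.1.diff h₁.1
  have hΔ : W₁ ∆ W₂ = (W₁ \ W₂) ∪ (W₂ \ W₁) := Set.symmDiff_def _ _
  have hΔm : MeasurableSet (W₁ ∆ W₂) := by rw [hΔ]; exact hAm.union hBm
  have hdisj : Disjoint (W₁ \ W₂) (W₂ \ W₁) := disjoint_sdiff_sdiff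
  obtain ⟨hTm, hvT1⟩ := vol_image_tau hAm ((tau_injOn h₁).mono diff_subset)
  have hvT2 : volume (W₂ \ W₁) = volume (tau '' (W₁ \ W₂)) := by
    obtain ⟨_, h2⟩ := vol_image_tau hBm ((tau_injOn h₂).mono diff_subset)
    rw [← h2, tau_image_diff_eq h₂ h₁]
  obtain ⟨hDm, hrD1⟩ := rho_image_delta hAm ((delta_injOn h₁).mono diff_subset)
  have hrD2 : rho (W₂ \ W₁) = rho (delta '' (W₁ \ W₂)) := by
    obtain ⟨_, h2⟩ := rho_image_delta hBm ((delta_injOn h₂).mono diff_subset)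
    rw [← h2, delta_image_diff_eq h₂ h₁]
  have hvolΔ : volume (W₁ ∆ W₂) = 2 * volume (tau '' (W₁ \ W₂)) := by
    rw [hΔ, measure_union hdisj hBm, ← hvT1, hvT2, two_mul]
  have hrhoΔ : rho (W₁ ∆ W₂) = 2 * rho (delta '' (W₁ \ W₂)) := by
    rw [hΔ, measure_union hdisj hBm, ← hrD1, hrD2, two_mul]
  unfold dws
  rw [integral_inv_abs hΔm, nu_omega h₁ h₂, vol_omega' h₁ h₂, hvolΔ, hrhoΔ]
  congr 1
  · congr 1
    rw [ENNReal.toReal_mul, ENNReal.toReal_mul,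
      ENNReal.toReal_ofReal (inv_nonneg.2 Real.two_pi_pos.le), ENNReal.toReal_ofNat]
    rw [← mul_assoc, show 4*π*(2*π)⁻¹ = 2 from by field_simp; ring]
  · congr 1
    rw [ENNReal.toReal_mul, ENNReal.toReal_ofNat]

end
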